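/- Block shortening is valid: for N = 2^n, S < N, and the shortening set Z = {N−S, ..., N−1}, every entry G_N(i, z) with i ∉ Z and z ∈ Z equals 0; consequently, for any codeword x = u·G_N with u_z = 0 for all z ∈ Z, the coded bits x_z are 0 for all z ∈ Z. -/

import Mathlib

open Matrix

/-- The 2×2 polar kernel over `F₂`. -/
def G2 : Matrix (Fin 2) (Fin 2) (ZMod 2) := !![1, 0; 1, 1]

/-- `GN n = G2^{⊗n}`, the `n`-fold Kronecker power of `G2` over `F₂`. -/
def GN : (n : ℕ) → Matrix (Fin (2 ^ n)) (Fin (2 ^ n)) (ZMod 2)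
  | 0 => 1
  | n + 1 =>
    Matrix.reindex (finProdFinEquiv.trans (finCongr (by ring)))
      (finProdFinEquiv.trans (finCongr (by ring)))
      (Matrix.kroneckerMap (· * ·) G2 (GN n))


/-- Block shortening is valid: with `N = 2^n`, `S < N`, and shortening set
`Z = {N−S, …, N−1}`, every entry `G_N(i,z)` with `i ∉ Z`, `z ∈ Z` is `0`, and
every codeword `x = u·G_N` with `u` vanishing on `Z` satisfies `x_z = 0` for `z ∈ Z`. -/
lemma G2_tri : ∀ a b : Fin 2, a.val < b.val → G2 a b = 0 := by
  intro a b h; fin_cases a <;> fin_cases b <;> simp [G2] at h ⊢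

lemma GN_tri : ∀ n (i z : Fin (2^n)), i.val < z.val → GN n i z = 0 := by
  intro n
  induction n with
  | zero =>
    intro i z h
    have := i.isLt; have := z.isLt; omega
  | succ n ih =>
    intro i z h
    show (Matrix.reindex _ _ (Matrix.kroneckerMap (· * ·) G2 (GN n))) i z = 0
    rw [Matrix.reindex_apply, Matrix.submatrix_apply, Equiv.symm_trans_apply,
      Equiv.symm_trans_apply]
    simp only [finCongr_symm, finCongr_apply, finProdFinEquiv_symm_apply,
      Matrix.kroneckerMap_apply]
    have hi : (Fin.divNat (Fin.cast (by ring) i : Fin (2 * 2^n))).val = i.val / 2^n := rfl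
    have hz : (Fin.divNat (Fin.cast (by ring) z : Fin (2 * 2^n))).val = z.val / 2^n := rfl
    have hi2 : (Fin.modNat (Fin.cast (by ring) i : Fin (2 * 2^n))).val = i.val % 2^n := rfl
    have hz2 : (Fin.modNat (Fin.cast (by ring) z : Fin (2 * 2^n))).val = z.val % 2^n := rfl
    by_cases hd : i.val / 2^n = z.val / 2^n
    · have hm : i.val % 2^n < z.val % 2^n := by
        have e1 := Nat.div_add_mod i.val (2^n)
        have e2 := Nat.div_add_mod z.val (2^n)
        rw [hd] at e1
        omega
      rw [ih _ _ (by rw [hi2, hz2]; exact hm), mul_zero]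
    · have : i.val / 2^n < z.val / 2^n := by
        rcases Nat.lt_or_ge (i.val / 2^n) (z.val / 2^n) with h'|h'
        · exact h'
        · exact absurd (Nat.le_antisymm (Nat.div_le_div_right h.le) h') hd
      rw [G2_tri _ _ (by rw [hi, hz]; exact this), zero_mul]

theorem block_shortening_valid (n S : ℕ) (hS : S < 2 ^ n) :
    (∀ i z : Fin (2 ^ n), ¬ (2 ^ n - S ≤ i.val) → 2 ^ n - S ≤ z.val → GN n i z = 0) ∧
    (∀ u : Fin (2 ^ n) → ZMod 2,
      (∀ z : Fin (2 ^ n), 2 ^ n - S ≤ z.val → u z = 0) →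
      ∀ z : Fin (2 ^ n), 2 ^ n - S ≤ z.val → Matrix.vecMul u (GN n) z = 0) := by
  constructor
  · intro i z hi hz
    exact GN_tri n i z (by omega)
  · intro u hu z hz
    rw [Matrix.vecMul, dotProduct]
    apply Finset.sum_eq_zero
    intro i _
    by_cases hi : 2 ^ n - S ≤ i.val
    · rw [hu i hi, zero_mul]
    · rw [GN_tri n i z (by omega), mul_zero]
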